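/- Let p be a prime, q a power of p, and s ∈ 𝔽_q^×. Define the pairing β(x,y) = Tr_{𝔽_q/𝔽_p}(s·(x·y^p − x^p·y)). Then the left kernel {x ∈ 𝔽_q : β(x,y) = 0 for all y ∈ 𝔽_q} equals {x ∈ 𝔽_q : s^p·x^{p²} = s·x}. -/

import Mathlib

/-- for `s ∈ 𝔽_q^×`, the left kernel of the pairing
`β(x,y) = Tr_{𝔽_q/𝔽_p}(s·(x·y^p − x^p·y))` equals `{x : s^p·x^(p²) = s·x}`. -/
theorem stmt_13 (p : ℕ) (hp : p.Prime) (F : Type*) [Field F] [Fintype F] [CharP F p]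
    [Algebra (ZMod p) F] (s : F) (hs : s ≠ 0) :
    ∀ x : F,
      (∀ y : F, Algebra.trace (ZMod p) F (s * (x * y ^ p - x ^ p * y)) = 0) ↔
        s ^ p * x ^ (p ^ 2) = s * x := by
  haveI : Fact p.Prime := ⟨hp⟩
  have hcomm : ∀ r : ZMod p, frobeniusEquiv F p (algebraMap (ZMod p) F r)
      = algebraMap (ZMod p) F r := by
    intro r
    rw [frobeniusEquiv_apply, frobenius_def, ← map_pow, ZMod.pow_card]
  let e : F ≃ₐ[ZMod p] F := AlgEquiv.ofRingEquiv (f := frobeniusEquiv F p) hcomm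
  have htrfrob : ∀ z : F, Algebra.trace (ZMod p) F (z ^ p) = Algebra.trace (ZMod p) F z := by
    intro z
    rw [← frobenius_def]
    exact Algebra.trace_eq_of_algEquiv e z
  intro x
  set u : F := (frobeniusEquiv F p).symm (s * x) with hu
  have hup : u ^ p = s * x := (frobeniusEquiv F p).apply_symm_apply (s * x)
  have key : ∀ y : F, Algebra.trace (ZMod p) F (s * (x * y ^ p - x ^ p * y))
      = Algebra.trace (ZMod p) F ((u - s * x ^ p) * y) := by
    intro y
    have h1 : s * (x * y ^ p - x ^ p * y) = (u * y) ^ p - s * x ^ p * y := by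
      rw [mul_pow, hup]; ring
    rw [h1, map_sub, htrfrob (u * y), ← map_sub]
    congr 1
    ring
  constructor
  · intro h
    have h0 : u - s * x ^ p = 0 := by
      apply (traceForm_nondegenerate (ZMod p) F).1 (u - s * x ^ p)
      intro y
      have hy := h y
      rw [key y] at hy
      rw [Algebra.traceForm_apply]
      exact hy
    have hux : u = s * x ^ p := sub_eq_zero.mp h0
    calc s ^ p * x ^ (p ^ 2) = (s * x ^ p) ^ p := by rw [mul_pow, ← pow_mul, pow_two]
    _ = u ^ p := by rw [hux]
    _ = s * x := hup
  · intro h y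
    have hux : u = s * x ^ p := by
      apply frobenius_inj F p
      simp only [frobenius_def, hup]
      rw [← h, mul_pow, ← pow_mul, pow_two]
    rw [key y, hux, sub_self, zero_mul, map_zero]
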